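/- For a > 0 and positive integer b, the integral ∫₀^∞ log₂(1+ax) d((1-e^{-x})^b) equals (b/ln 2) · Σ_{ℓ=0}^{b-1} C(b-1,ℓ) ((-1)^ℓ/(ℓ+1)) exp((ℓ+1)/a) E₁((ℓ+1)/a), where E₁(x) = ∫_x^∞ e^{-t}/t dt is the exponential integral. -/

import Mathlib

open Real Finset MeasureTheory

/-- The exponential integral `E₁ x = ∫_x^∞ e^{-t}/t dt`. -/
noncomputable def E1 (x : ℝ) : ℝ := ∫ t in Set.Ioi x, Real.exp (-t) / t

lemma int_exp_div (a c : ℝ) (ha : 0 < a) (hc : 0 < c) :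
    IntegrableOn (fun x : ℝ => Real.exp (-(c * x)) / (1 + a * x)) (Set.Ioi 0) := by
  have hint : IntegrableOn (fun x : ℝ => Real.exp (-c * x)) (Set.Ioi 0) :=
    exp_neg_integrableOn_Ioi 0 hc
  apply Integrable.mono' hint
  · apply ContinuousOn.aestronglyMeasurable _ measurableSet_Ioi
    apply ContinuousOn.div (by fun_prop) (by fun_prop)
    intro x hx
    have : (0:ℝ) < x := hx
    positivity
  · filter_upwards [ae_restrict_mem measurableSet_Ioi] with x hx
    have hx0 : (0:ℝ) < x := hx
    have h1 : (1:ℝ) ≤ 1 + a * x := by nlinarith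
    rw [Real.norm_eq_abs, abs_div, abs_of_nonneg (Real.exp_pos _).le,
      abs_of_pos (by linarith : (0:ℝ) < 1 + a * x), neg_mul]
    calc Real.exp (-(c*x)) / (1 + a*x) ≤ Real.exp (-(c*x)) / 1 := by
          apply div_le_div_of_nonneg_left (Real.exp_pos _).le one_pos h1
      _ = Real.exp (-(c*x)) := by rw [div_one]

lemma int_x_exp (c : ℝ) (hc : 0 < c) :
    IntegrableOn (fun x : ℝ => x * Real.exp (-(c * x))) (Set.Ioi 0) := by
  have := integrableOn_rpow_mul_exp_neg_mul_rpow (p := 1) (s := 1) (b := c)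
    (by norm_num) zero_lt_one hc
  apply this.congr_fun _ measurableSet_Ioi
  intro x hx
  simp [Real.rpow_one, neg_mul]

lemma int_log_exp (a c : ℝ) (ha : 0 < a) (hc : 0 < c) :
    IntegrableOn (fun x : ℝ => Real.log (1 + a * x) * Real.exp (-(c * x))) (Set.Ioi 0) := by
  apply Integrable.mono' ((int_x_exp c hc).const_mul a)
  · apply ContinuousOn.aestronglyMeasurable _ measurableSet_Ioi
    apply ContinuousOn.mul _ (by fun_prop)
    apply ContinuousOn.log (by fun_prop)
    intro x hx
    have : (0:ℝ) < x := hx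
    positivity
  · filter_upwards [ae_restrict_mem measurableSet_Ioi] with x hx
    have hx0 : (0:ℝ) < x := hx
    have h1 : (1:ℝ) ≤ 1 + a * x := by nlinarith
    have hlog0 : 0 ≤ Real.log (1 + a * x) := Real.log_nonneg h1
    have hlog : Real.log (1 + a * x) ≤ a * x := by
      have := Real.log_le_sub_one_of_pos (by linarith : (0:ℝ) < 1 + a * x)
      linarith
    rw [Real.norm_eq_abs, abs_mul, abs_of_nonneg hlog0,
      abs_of_nonneg (Real.exp_pos _).le]
    calc Real.log (1 + a*x) * Real.exp (-(c*x)) ≤ (a*x) * Real.exp (-(c*x)) := by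
          apply mul_le_mul_of_nonneg_right hlog (Real.exp_pos _).le
      _ = a * (x * Real.exp (-(c*x))) := by ring

lemma ibp_lemma (a c : ℝ) (ha : 0 < a) (hc : 0 < c) :
    ∫ x in Set.Ioi (0:ℝ), Real.log (1 + a * x) * Real.exp (-(c * x)) =
      (a / c) * ∫ x in Set.Ioi (0:ℝ), Real.exp (-(c * x)) / (1 + a * x) := by
  set F : ℝ → ℝ := fun x => -(Real.exp (-(c * x)) * Real.log (1 + a * x)) / c with hF
  set f' : ℝ → ℝ := fun x =>
    Real.log (1 + a * x) * Real.exp (-(c * x)) -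
      (a / c) * (Real.exp (-(c * x)) / (1 + a * x)) with hf'
  have hderiv : ∀ x ∈ Set.Ici (0:ℝ), HasDerivAt F (f' x) x := by
    intro x hx
    have hx0 : (0:ℝ) ≤ x := hx
    have hpos : (0:ℝ) < 1 + a * x := by nlinarith
    have h1 : HasDerivAt (fun y : ℝ => Real.exp (-(c * y))) (-c * Real.exp (-(c * x))) x := by
      have := (Real.hasDerivAt_exp (-(c * x))).comp x
        (((hasDerivAt_id x).const_mul c).neg)
      simpa [Function.comp_def, mul_comm] using this
    have h2 : HasDerivAt (fun y : ℝ => Real.log (1 + a * y)) (a / (1 + a * x)) x := by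
      have hg : HasDerivAt (fun y : ℝ => 1 + a * y) a x := by
        simpa using ((hasDerivAt_id x).const_mul a).const_add 1
      have := (Real.hasDerivAt_log hpos.ne').comp x hg
      simpa [Function.comp_def, div_eq_mul_inv, mul_comm] using this
    have := ((h1.fun_mul h2).fun_neg).div_const c
    refine this.congr_deriv ?_
    rw [hf']
    field_simp
    ring
  have hgtend : Filter.Tendsto (fun x : ℝ => Real.exp (-(c * x)) * Real.log (1 + a * x))
      Filter.atTop (nhds 0) := by
    have h1 : Filter.Tendsto (fun y : ℝ => y * Real.exp (-y)) Filter.atTop (nhds 0) := by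
      simpa using Real.tendsto_pow_mul_exp_neg_atTop_nhds_zero 1
    have h2 : Filter.Tendsto (fun x : ℝ => (c * x) * Real.exp (-(c * x)))
        Filter.atTop (nhds 0) := h1.comp (Filter.tendsto_id.const_mul_atTop hc)
    have h3 : Filter.Tendsto (fun x : ℝ => (a / c) * ((c * x) * Real.exp (-(c * x))))
        Filter.atTop (nhds 0) := by simpa using h2.const_mul (a / c)
    apply squeeze_zero' (g := fun x => (a / c) * ((c * x) * Real.exp (-(c * x)))) _ _ h3
    · filter_upwards [Filter.eventually_ge_atTop (0:ℝ)] with x hx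
      have h1 : (1:ℝ) ≤ 1 + a * x := by nlinarith
      exact mul_nonneg (Real.exp_pos _).le (Real.log_nonneg h1)
    · filter_upwards [Filter.eventually_ge_atTop (0:ℝ)] with x hx
      have h1 : (1:ℝ) ≤ 1 + a * x := by nlinarith
      have hlog : Real.log (1 + a * x) ≤ a * x := by
        have := Real.log_le_sub_one_of_pos (by linarith : (0:ℝ) < 1 + a * x)
        linarith
      calc Real.exp (-(c*x)) * Real.log (1 + a*x) ≤ Real.exp (-(c*x)) * (a*x) :=
            mul_le_mul_of_nonneg_left hlog (Real.exp_pos _).le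
        _ = (a/c) * ((c*x) * Real.exp (-(c*x))) := by field_simp
  have htend : Filter.Tendsto F Filter.atTop (nhds 0) := by
    have := (hgtend.neg).div_const c
    simpa using this
  have hint : IntegrableOn f' (Set.Ioi 0) :=
    (int_log_exp a c ha hc).sub (((int_exp_div a c ha hc).const_mul (a / c)))
  have h0 := integral_Ioi_of_hasDerivAt_of_tendsto' hderiv hint htend
  have hF0 : F 0 = 0 := by simp [hF]
  rw [hF0, sub_zero] at h0
  have hsplit := integral_sub (int_log_exp a c ha hc)
    ((int_exp_div a c ha hc).const_mul (a / c))
  rw [hf'] at h0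
  rw [h0] at hsplit
  have := hsplit.symm
  rw [integral_const_mul] at this
  linarith [this]

lemma E1_eq (a c : ℝ) (ha : 0 < a) (hc : 0 < c) :
    E1 (c / a) = a * Real.exp (-(c / a)) *
      ∫ x in Set.Ioi (0:ℝ), Real.exp (-(c * x)) / (1 + a * x) := by
  have h0 : E1 (c / a) = ∫ x in Set.Ioi (0:ℝ), Real.exp (-(x + c/a)) / (x + c/a) := by
    rw [E1]
    have hmp : MeasurePreserving (fun x : ℝ => x + c/a) volume volume :=
      measurePreserving_add_right volume (c/a)
    have hemb : MeasurableEmbedding (fun x : ℝ => x + c/a) :=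
      (MeasurableEquiv.addRight (c/a)).measurableEmbedding
    have h := hmp.setIntegral_preimage_emb hemb
      (fun t => Real.exp (-t) / t) (Set.Ioi (c/a))
    rw [← h, Set.preimage_add_const_Ioi, sub_self]
  have h1 := integral_comp_mul_left_Ioi
    (fun x : ℝ => Real.exp (-(x + c/a)) / (x + c/a)) 0 hc
  rw [mul_zero] at h1
  have h1' : (∫ x in Set.Ioi (0:ℝ), Real.exp (-(c * x + c/a)) / (c * x + c/a))
      = c⁻¹ * ∫ x in Set.Ioi (0:ℝ), Real.exp (-(x + c/a)) / (x + c/a) := by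
    simpa using h1
  have h2 : ∀ x ∈ Set.Ioi (0:ℝ),
      Real.exp (-(c * x + c/a)) / (c * x + c/a)
      = (a / c) * Real.exp (-(c/a)) * (Real.exp (-(c * x)) / (1 + a * x)) := by
    intro x hx
    have hx0 : (0:ℝ) < x := hx
    have hpos : (0:ℝ) < 1 + a * x := by nlinarith
    have hexp : Real.exp (-(c * x + c/a)) = Real.exp (-(c * x)) * Real.exp (-(c/a)) := by
      rw [← Real.exp_add]; ring_nf
    have hkey : c * x + c / a = (c / a) * (1 + a * x) := by field_simp; ring
    rw [hexp, hkey]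
    field_simp
  have h3 : (∫ x in Set.Ioi (0:ℝ), Real.exp (-(c * x + c/a)) / (c * x + c/a))
      = (a / c) * Real.exp (-(c/a)) *
        ∫ x in Set.Ioi (0:ℝ), Real.exp (-(c * x)) / (1 + a * x) := by
    rw [setIntegral_congr_fun measurableSet_Ioi h2, integral_const_mul]
  rw [h0]
  have h4 := h1'.symm.trans h3
  field_simp at h4 ⊢
  rw [← h4]
  congr 1
  ext x
  ring_nf

lemma key_lemma (a c : ℝ) (ha : 0 < a) (hc : 0 < c) :
    ∫ x in Set.Ioi (0:ℝ), Real.log (1 + a * x) * Real.exp (-(c * x)) =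
      Real.exp (c / a) * E1 (c / a) / c := by
  rw [ibp_lemma a c ha hc, E1_eq a c ha hc, Real.exp_neg]
  field_simp

theorem stmt_1 (a : ℝ) (ha : 0 < a) (b : ℕ) (hb : 0 < b) :
    ∫ x in Set.Ioi (0 : ℝ),
        (Real.log (1 + a * x) / Real.log 2) *
          deriv (fun y : ℝ => (1 - Real.exp (-y)) ^ b) x
      = ((b : ℝ) / Real.log 2) * ∑ ℓ ∈ Finset.range b,
          ((b - 1).choose ℓ : ℝ) * ((-1) ^ ℓ / ((ℓ : ℝ) + 1)) *
            Real.exp (((ℓ : ℝ) + 1) / a) * E1 (((ℓ : ℝ) + 1) / a) := by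
  have hcong : ∀ x ∈ Set.Ioi (0:ℝ),
      (Real.log (1 + a * x) / Real.log 2) *
          deriv (fun y : ℝ => (1 - Real.exp (-y)) ^ b) x
      = ∑ ℓ ∈ Finset.range b, ((b:ℝ) / Real.log 2) * ((b-1).choose ℓ : ℝ) * (-1:ℝ)^ℓ *
          (Real.log (1 + a * x) * Real.exp (-(((ℓ:ℝ) + 1) * x))) := by
    intro x hx
    have hd : HasDerivAt (fun y : ℝ => (1 - Real.exp (-y)) ^ b)
        ((b:ℝ) * (1 - Real.exp (-x)) ^ (b-1) * Real.exp (-x)) x := by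
      have h1 : HasDerivAt (fun y : ℝ => 1 - Real.exp (-y)) (Real.exp (-x)) x := by
        have := (Real.hasDerivAt_exp (-x)).comp x (hasDerivAt_neg x)
        simpa using this.const_sub 1
      simpa using h1.fun_pow b
    rw [hd.deriv]
    have hb1 : b - 1 + 1 = b := by omega
    have hexp : (1 - Real.exp (-x)) ^ (b-1)
        = ∑ ℓ ∈ Finset.range b, (-Real.exp (-x))^ℓ * ((b-1).choose ℓ : ℝ) := by
      have h := add_pow (-Real.exp (-x)) 1 (b-1)
      rw [hb1] at h
      simpa [neg_add_eq_sub] using h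
    rw [hexp]
    rw [Finset.mul_sum, Finset.sum_mul, Finset.mul_sum]
    refine Finset.sum_congr rfl fun ℓ _ => ?_
    have he : Real.exp (-x) ^ ℓ * Real.exp (-x) = Real.exp (-(((ℓ:ℝ) + 1) * x)) := by
      rw [← Real.exp_nat_mul, ← Real.exp_add]
      congr 1
      ring
    rw [← he, neg_pow]
    ring
  rw [setIntegral_congr_fun measurableSet_Ioi hcong]
  rw [integral_finset_sum _ (fun ℓ _ => by
    exact ((int_log_exp a ((ℓ:ℝ)+1) ha (by positivity)).const_mul _))]
  rw [Finset.mul_sum]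
  refine Finset.sum_congr rfl fun ℓ _ => ?_
  rw [integral_const_mul, key_lemma a ((ℓ:ℝ)+1) ha (by positivity)]
  ring
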